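/- Let n ≥ 2 be an integer, c > 0 a real number, and Y a random variable with 0 ≤ Y ≤ 1 almost surely. Suppose that Pr[Y ≥ 1/(4i)] ≥ c·i/n for every integer 1 ≤ i ≤ n. Then E[Y] ≥ (c/8)·(log n)/n. -/

import Mathlib

open MeasureTheory Finset

lemma harm_sum (n : ℕ) : ∑ k ∈ Finset.range n, (1:ℝ)/(k+2) = (harmonic (n+1) : ℝ) - 1 := by
  induction n with
  | zero => simp [harmonic_succ]
  | succ m ih =>
    have h : (harmonic (m+1+1) : ℝ) = (harmonic (m+1) : ℝ) + ((m:ℝ)+2)⁻¹ := by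
      rw [harmonic_succ]; push_cast; ring
    rw [Finset.sum_range_succ, ih, h]; ring

lemma half_log_le (n : ℕ) (hn : 2 ≤ n) :
    (1/2) * Real.log n ≤ ∑ k ∈ Finset.range n, (1:ℝ)/(k+2) := by
  rw [harm_sum]
  have h1 : Real.log ((n:ℝ)+2) ≤ (harmonic (n+1) : ℝ) := by
    have := log_add_one_le_harmonic (n+1)
    push_cast at this
    convert this using 2
    ring
  have hn2 : (2:ℝ) ≤ (n:ℝ) := by exact_mod_cast hn
  have hnpos : (0:ℝ) < n := by linarith
  have key : (1/2) * Real.log n + 1 ≤ Real.log ((n:ℝ)+2) := by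
    have he : Real.exp 1 ^ 2 < 8 := by
      have := Real.exp_one_lt_d9
      nlinarith [Real.exp_pos 1]
    have h8 : Real.exp 1 ^ 2 * n ≤ ((n:ℝ)+2)^2 := by nlinarith
    have hx : Real.log (Real.exp 1 ^ 2 * n) ≤ Real.log (((n:ℝ)+2)^2) := by
      apply Real.log_le_log (by positivity) h8
    rw [Real.log_mul (by positivity) (ne_of_gt hnpos), Real.log_pow, Real.log_pow,
      Real.log_exp] at hx
    push_cast at hx
    linarith
  linarith

/-- Layer-cake summation: if a `[0,1]`-valued random variable `Y` satisfies
`Pr[Y ≥ 1/(4i)] ≥ c·i/n` for all `1 ≤ i ≤ n`, then `E[Y] ≥ (c/8)·(log n)/n`. -/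
theorem layer_cake_log_lower_bound {Ω : Type*} [MeasurableSpace Ω]
    (P : Measure Ω) [IsProbabilityMeasure P] (n : ℕ) (hn : 2 ≤ n)
    (c : ℝ) (hc : 0 < c) (Y : Ω → ℝ) (hY : Measurable Y)
    (h01 : ∀ᵐ ω ∂P, Y ω ∈ Set.Icc (0 : ℝ) 1)
    (hprob : ∀ i : ℕ, 1 ≤ i → i ≤ n →
      ENNReal.ofReal (c * (i : ℝ) / (n : ℝ)) ≤ P {ω | 1 / (4 * (i : ℝ)) ≤ Y ω}) :
    (c / 8) * Real.log n / n ≤ ∫ ω, Y ω ∂P := by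
  have hn2 : (2:ℝ) ≤ (n:ℝ) := by exact_mod_cast hn
  have hnpos : (0:ℝ) < n := by linarith
  set A : ℕ → Set Ω := fun i => {ω | 1 / (4 * (i : ℝ)) ≤ Y ω} with hAdef
  have hAmeas : ∀ i, MeasurableSet (A i) := fun i =>
    measurableSet_le measurable_const hY
  set coef : ℕ → ℝ := fun k => 1/(4*((k:ℝ)+1)) - 1/(4*((k:ℝ)+2)) with hcoef
  have hcoefnn : ∀ k : ℕ, 0 ≤ coef k := by
    intro k
    have h1 : (0:ℝ) < 4*((k:ℝ)+1) := by positivity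
    have h2 : (0:ℝ) < 4*((k:ℝ)+2) := by positivity
    have : 1/(4*((k:ℝ)+2)) ≤ 1/(4*((k:ℝ)+1)) := by
      apply one_div_le_one_div_of_le h1; linarith
    simp only [hcoef]; linarith
  set g : Ω → ℝ := fun ω => ∑ k ∈ Finset.range n,
    Set.indicator (A (k+1)) (fun _ => coef k) ω with hg
  have hterm_int : ∀ k : ℕ, Integrable (Set.indicator (A (k+1)) (fun _ => coef k)) P :=
    fun k => (integrable_const (coef k)).indicator (hAmeas (k+1))
  have hgint : Integrable g P := integrable_finset_sum _ (fun k _ => hterm_int k)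
  have hYint : Integrable Y P := by
    refine ⟨hY.aestronglyMeasurable, HasFiniteIntegral.of_bounded (C := 1) ?_⟩
    filter_upwards [h01] with ω hω
    rw [Real.norm_eq_abs, abs_le]
    exact ⟨by linarith [hω.1], hω.2⟩
  -- pointwise bound g ≤ Y a.e.
  have hgle : ∀ᵐ ω ∂P, g ω ≤ Y ω := by
    filter_upwards [h01] with ω hω
    set f : ℕ → ℝ := fun k => min (Y ω) (1/(4*((k:ℝ)+1))) with hf
    have hstep : ∀ k ∈ Finset.range n,
        Set.indicator (A (k+1)) (fun _ => coef k) ω ≤ f k - f (k+1) := by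
      intro k _
      by_cases hmem : ω ∈ A (k+1)
      · rw [Set.indicator_of_mem hmem]
        have hYge : 1/(4*((k:ℝ)+1)) ≤ Y ω := by
          have : 1/(4*(((k+1:ℕ)):ℝ)) ≤ Y ω := hmem
          push_cast at this; exact this
        have hf0 : f k = 1/(4*((k:ℝ)+1)) := min_eq_right hYge
        have hf1 : f (k+1) ≤ 1/(4*((k:ℝ)+2)) := by
          calc f (k+1) ≤ 1/(4*(((k+1:ℕ):ℝ)+1)) := min_le_right _ _
            _ = 1/(4*((k:ℝ)+2)) := by push_cast; ring_nf
        simp only [hcoef]; rw [hf0]; linarith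
      · rw [Set.indicator_of_notMem hmem]
        have : f (k+1) ≤ f k := by
          apply min_le_min le_rfl
          apply one_div_le_one_div_of_le (by positivity)
          push_cast; linarith
        linarith
    calc g ω ≤ ∑ k ∈ Finset.range n, (f k - f (k+1)) := Finset.sum_le_sum hstep
      _ = f 0 - f n := Finset.sum_range_sub' f n
      _ ≤ Y ω := by
          have h0 : f 0 ≤ Y ω := min_le_left _ _
          have h1 : 0 ≤ f n := le_min hω.1 (by positivity)
          linarith
  -- integral of g
  have hintg : ∫ ω, g ω ∂P = ∑ k ∈ Finset.range n, coef k * (P (A (k+1))).toReal := by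
    rw [hg, integral_finset_sum _ (fun k _ => hterm_int k)]
    refine Finset.sum_congr rfl (fun k _ => ?_)
    rw [integral_indicator_const _ (hAmeas (k+1)), smul_eq_mul, mul_comm]; rfl
  -- lower bound each probability
  have hlow : ∀ k ∈ Finset.range n,
      c/(4*n) * (1/((k:ℝ)+2)) ≤ coef k * (P (A (k+1))).toReal := by
    intro k hk
    rw [Finset.mem_range] at hk
    have hk1 : 1 ≤ k+1 := Nat.le_add_left 1 k
    have hk2 : k+1 ≤ n := hk
    have hp := hprob (k+1) hk1 hk2
    have hpr : c * ((k+1:ℕ):ℝ) / n ≤ (P (A (k+1))).toReal := by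
      rw [← ENNReal.toReal_ofReal (show (0:ℝ) ≤ c * ((k+1:ℕ):ℝ) / n by positivity)]
      exact ENNReal.toReal_mono (measure_ne_top P _) hp
    have hcoefval : coef k * (c * ((k+1:ℕ):ℝ) / n) = c/(4*n) * (1/((k:ℝ)+2)) := by
      simp only [hcoef]; push_cast; field_simp; ring
    calc c/(4*n) * (1/((k:ℝ)+2)) = coef k * (c * ((k+1:ℕ):ℝ) / n) := hcoefval.symm
      _ ≤ coef k * (P (A (k+1))).toReal :=
          mul_le_mul_of_nonneg_left hpr (hcoefnn k)
  have hsum : c/(4*n) * ∑ k ∈ Finset.range n, (1:ℝ)/((k:ℝ)+2)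
      ≤ ∫ ω, g ω ∂P := by
    rw [hintg, Finset.mul_sum]
    exact Finset.sum_le_sum hlow
  have hfinal : (c/8) * Real.log n / n ≤ c/(4*n) * ∑ k ∈ Finset.range n, (1:ℝ)/((k:ℝ)+2) := by
    have h := half_log_le n hn
    have hpos : (0:ℝ) < c/(4*n) := by positivity
    have := mul_le_mul_of_nonneg_left h (le_of_lt hpos)
    calc (c/8) * Real.log n / n = c/(4*n) * ((1/2) * Real.log n) := by ring
      _ ≤ _ := this
  have hgY : ∫ ω, g ω ∂P ≤ ∫ ω, Y ω ∂P := integral_mono_ae hgint hYint hgle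
  linarith
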